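/- For every θ ∈ ℝ there exists a constant C_θ > 0 such that for all ν ∈ [-1,1] with ν ≠ 0 and all (x,z) ∈ D₀: |(D_x^θ D_z^θ k^ν)(x,z)| ≤ C_θ |α(x) + iν|; that is, the kernel (D_x^θ D_z^θ k^ν)(x,z)/(α(x)+iν) is bounded on D₀ uniformly in ν ∈ [-1,1] \ {0}. -/

import Mathlib

open Complex

/-- the kernel `k^ν(x,z) = B_ν(z)A_ν(x) − B_ν(x)A_ν(z)` -/
noncomputable def kker (A B : ℝ → ℂ) (x z : ℝ) : ℂ := B z * A x - B x * A z

/-- `(D_z^θ k^ν)(x,z)` -/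
noncomputable def Dzk (δ : ℝ → ℝ) (θ : ℝ) (A A' B B' : ℝ → ℂ) (x z : ℝ) : ℂ :=
  Complex.I * (θ : ℂ) * (B' z * A x - B x * A' z)
    - Complex.I * (δ z : ℂ) * kker A B x z

/-- `∂_x (D_z^θ k^ν)(x,z)` -/
noncomputable def pxDzk (δ : ℝ → ℝ) (θ : ℝ) (A A' B B' : ℝ → ℂ) (x z : ℝ) : ℂ :=
  Complex.I * (θ : ℂ) * (B' z * A' x - B' x * A' z)
    - Complex.I * (δ z : ℂ) * (B z * A' x - B' x * A z)

/-- `(D_x^θ D_z^θ k^ν)(x,z)` -/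
noncomputable def DxDzk (δ : ℝ → ℝ) (θ : ℝ) (A A' B B' : ℝ → ℂ) (x z : ℝ) : ℂ :=
  Complex.I * (θ : ℂ) * pxDzk δ θ A A' B B' x z
    - Complex.I * (δ x : ℂ) * Dzk δ θ A A' B B' x z

open Set

set_option maxHeartbeats 1000000

lemma gron_fwd {E : Type*} [NormedAddCommGroup E] [NormedSpace ℝ E]
    {a b K : ℝ} {f f' : ℝ → E}
    (hd : ∀ t ∈ Set.Icc a b, HasDerivAt f (f' t) t)
    (hb : ∀ t ∈ Set.Icc a b, ‖f' t‖ ≤ K * ‖f t‖) :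
    ∀ t ∈ Set.Icc a b, ‖f t‖ ≤ ‖f a‖ * Real.exp (K * (t - a)) := by
  intro t ht
  have hcont : ContinuousOn f (Set.Icc a b) :=
    fun s hs => ((hd s hs).continuousAt).continuousWithinAt
  have h := norm_le_gronwallBound_of_norm_deriv_right_le (δ := ‖f a‖) (ε := 0) hcont
      (fun s hs => ((hd s (Set.mem_Icc_of_Ico hs)).hasDerivWithinAt))
      le_rfl
      (fun s hs => by simpa using hb s (Set.mem_Icc_of_Ico hs)) t ht
  simpa [gronwallBound_ε0] using h

lemma gron_bwd {E : Type*} [NormedAddCommGroup E] [NormedSpace ℝ E]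
    {a b K : ℝ} {f f' : ℝ → E}
    (hd : ∀ t ∈ Set.Icc a b, HasDerivAt f (f' t) t)
    (hb : ∀ t ∈ Set.Icc a b, ‖f' t‖ ≤ K * ‖f t‖) :
    ∀ t ∈ Set.Icc a b, ‖f t‖ ≤ ‖f b‖ * Real.exp (K * (b - t)) := by
  intro t ht
  have hg : ∀ s ∈ Set.Icc a b,
      HasDerivAt (fun s => f (a + b - s)) ((-1 : ℝ) • f' (a + b - s)) s := by
    intro s hs
    have hmem : a + b - s ∈ Set.Icc a b := ⟨by linarith [hs.2], by linarith [hs.1]⟩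
    exact (hd _ hmem).scomp s (((hasDerivAt_id s).const_sub (a + b)))
  have hb' : ∀ s ∈ Set.Icc a b,
      ‖(-1 : ℝ) • f' (a + b - s)‖ ≤ K * ‖f (a + b - s)‖ := by
    intro s hs
    have hmem : a + b - s ∈ Set.Icc a b := ⟨by linarith [hs.2], by linarith [hs.1]⟩
    simpa using hb _ hmem
  have h := gron_fwd hg hb' (a + b - t) ⟨by linarith [ht.2], by linarith [ht.1]⟩
  have e1 : a + b - (a + b - t) = t := by ring
  have e2 : a + b - a = b := by ring
  have e3 : a + b - t - a = b - t := by ring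
  rw [e1, e2, e3] at h
  exact h

lemma ode_bound {E : Type*} [NormedAddCommGroup E] [NormedSpace ℝ E]
    {a b K : ℝ} (hK : 0 ≤ K) {f f' : ℝ → E}
    (hd : ∀ t ∈ Set.Icc a b, HasDerivAt f (f' t) t)
    (hb : ∀ t ∈ Set.Icc a b, ‖f' t‖ ≤ K * ‖f t‖)
    {c : ℝ} (hc : c ∈ Set.Icc a b) :
    ∀ t ∈ Set.Icc a b, ‖f t‖ ≤ ‖f c‖ * Real.exp (K * (b - a)) := by
  intro t ht
  rcases le_total t c with h | h
  · have h1 := gron_bwd (a := a) (b := c)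
      (fun s hs => hd s ⟨hs.1, hs.2.trans hc.2⟩)
      (fun s hs => hb s ⟨hs.1, hs.2.trans hc.2⟩) t ⟨ht.1, h⟩
    refine h1.trans (mul_le_mul_of_nonneg_left (Real.exp_le_exp.mpr ?_) (norm_nonneg _))
    nlinarith [ht.1, hc.2, hc.1, ht.2]
  · have h1 := gron_fwd (a := c) (b := b)
      (fun s hs => hd s ⟨hc.1.trans hs.1, hs.2⟩)
      (fun s hs => hb s ⟨hc.1.trans hs.1, hs.2⟩) t ⟨h, ht.2⟩
    refine h1.trans (mul_le_mul_of_nonneg_left (Real.exp_le_exp.mpr ?_) (norm_nonneg _))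
    nlinarith [ht.1, hc.2, hc.1, ht.2]

lemma bound2 {p q p' q' : ℂ} {M : ℝ} (hp : ‖p‖ ≤ M) (hq : ‖q‖ ≤ M)
    (hp' : ‖p'‖ ≤ M) (hq' : ‖q'‖ ≤ M) : ‖p * q - p' * q'‖ ≤ 2 * M ^ 2 := by
  have hM : 0 ≤ M := le_trans (norm_nonneg p) hp
  calc ‖p * q - p' * q'‖ ≤ ‖p * q‖ + ‖p' * q'‖ := norm_sub_le _ _
    _ = ‖p‖ * ‖q‖ + ‖p'‖ * ‖q'‖ := by simp [norm_mul]
    _ ≤ M * M + M * M := by gcongr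
    _ = 2 * M ^ 2 := by ring

lemma main_est (δ δ' : ℝ → ℝ) (θ : ℝ) (w : ℝ → ℂ) (A A' B B' : ℝ → ℂ)
    (lo hi x z : ℝ) (hx : x ∈ Icc lo hi) (hz : z ∈ Icc lo hi)
    (hsub : uIcc x z ⊆ Icc lo hi)
    (hA : ∀ t ∈ Icc lo hi, HasDerivAt A (A' t) t)
    (hA' : ∀ t ∈ Icc lo hi, HasDerivAt A' (-(w t) * A t) t)
    (hB : ∀ t ∈ Icc lo hi, HasDerivAt B (B' t) t)
    (hB' : ∀ t ∈ Icc lo hi, HasDerivAt B' (-(w t) * B t) t)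
    (hδd : ∀ t ∈ uIcc x z, HasDerivWithinAt δ (δ' t) (uIcc x z) t)
    (M Kw Mδ Kδ : ℝ)
    (hM : ∀ t ∈ Icc lo hi, ‖A t‖ ≤ M ∧ ‖A' t‖ ≤ M ∧ ‖B t‖ ≤ M ∧ ‖B' t‖ ≤ M)
    (hKw : ∀ t ∈ Icc lo hi, ‖w t‖ ≤ Kw)
    (hMδ : ∀ t ∈ Icc lo hi, |δ t| ≤ Mδ)
    (hKδ : ∀ t ∈ uIcc x z, |δ' t| ≤ Kδ) :
    ‖DxDzk δ θ A A' B B' x z‖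
      ≤ ((|θ| * Kw + Mδ + Kδ) * ((|θ| + Mδ) * (2 * M ^ 2))) * |x - z| := by
  obtain ⟨hAz, hA'z, hBz, hB'z⟩ := hM z hz
  have hMδ0 : 0 ≤ Mδ := (abs_nonneg _).trans (hMδ z hz)
  have hKδ0 : 0 ≤ Kδ := (abs_nonneg _).trans (hKδ x left_mem_uIcc)
  have hKw0 : 0 ≤ Kw := (norm_nonneg _).trans (hKw z hz)
  have hM0 : 0 ≤ M := (norm_nonneg _).trans hAz
  set MB : ℝ := (|θ| + Mδ) * (2 * M ^ 2) with hMBdef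
  have hMB0 : 0 ≤ MB := by positivity
  -- bounds on Dzk and pxDzk
  have hDbd : ∀ t ∈ Icc lo hi, ‖Dzk δ θ A A' B B' t z‖ ≤ MB := by
    intro t ht
    obtain ⟨hAt, hA't, hBt, hB't⟩ := hM t ht
    calc ‖Dzk δ θ A A' B B' t z‖
        ≤ ‖Complex.I * (θ : ℂ) * (B' z * A t - B t * A' z)‖
          + ‖Complex.I * (δ z : ℂ) * kker A B t z‖ := norm_sub_le _ _
      _ = |θ| * ‖B' z * A t - B t * A' z‖ + |δ z| * ‖B z * A t - B t * A z‖ := by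
          simp [kker, norm_mul, Real.norm_eq_abs]
      _ ≤ |θ| * (2 * M ^ 2) + Mδ * (2 * M ^ 2) :=
          add_le_add (mul_le_mul_of_nonneg_left (bound2 hB'z hAt hBt hA'z) (abs_nonneg θ))
            (mul_le_mul (hMδ z hz) (bound2 hBz hAt hBt hAz) (norm_nonneg _) hMδ0)
      _ = MB := by rw [hMBdef]; ring
  have hPbd : ∀ t ∈ Icc lo hi, ‖pxDzk δ θ A A' B B' t z‖ ≤ MB := by
    intro t ht
    obtain ⟨hAt, hA't, hBt, hB't⟩ := hM t ht
    calc ‖pxDzk δ θ A A' B B' t z‖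
        ≤ ‖Complex.I * (θ : ℂ) * (B' z * A' t - B' t * A' z)‖
          + ‖Complex.I * (δ z : ℂ) * (B z * A' t - B' t * A z)‖ := norm_sub_le _ _
      _ = |θ| * ‖B' z * A' t - B' t * A' z‖ + |δ z| * ‖B z * A' t - B' t * A z‖ := by
          simp [norm_mul, Real.norm_eq_abs]
      _ ≤ |θ| * (2 * M ^ 2) + Mδ * (2 * M ^ 2) :=
          add_le_add (mul_le_mul_of_nonneg_left (bound2 hB'z hA't hB't hA'z) (abs_nonneg θ))
            (mul_le_mul (hMδ z hz) (bound2 hBz hA't hB't hAz) (norm_nonneg _) hMδ0)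
      _ = MB := by rw [hMBdef]; ring
  -- derivatives
  have hDd : ∀ t ∈ uIcc x z,
      HasDerivWithinAt (fun t => Dzk δ θ A A' B B' t z)
        (pxDzk δ θ A A' B B' t z) (uIcc x z) t := by
    intro t ht
    have ht' := hsub ht
    have h1 := ((hA t ht').const_mul (B' z)).sub ((hB t ht').mul_const (A' z))
    have h2 := ((hA t ht').const_mul (B z)).sub ((hB t ht').mul_const (A z))
    have h3 := (h1.const_mul (Complex.I * (θ : ℂ))).sub (h2.const_mul (Complex.I * (δ z : ℂ)))
    exact h3.hasDerivWithinAt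
  have hPd : ∀ t ∈ uIcc x z,
      HasDerivWithinAt (fun t => pxDzk δ θ A A' B B' t z)
        (-(w t) * Dzk δ θ A A' B B' t z) (uIcc x z) t := by
    intro t ht
    have ht' := hsub ht
    have h1 := ((hA' t ht').const_mul (B' z)).sub ((hB' t ht').mul_const (A' z))
    have h2 := ((hA' t ht').const_mul (B z)).sub ((hB' t ht').mul_const (A z))
    have h3 := (h1.const_mul (Complex.I * (θ : ℂ))).sub (h2.const_mul (Complex.I * (δ z : ℂ)))
    have heq : -(w t) * Dzk δ θ A A' B B' t z =
        Complex.I * (θ : ℂ) * (B' z * (-(w t) * A t) - -(w t) * B t * A' z)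
          - Complex.I * (δ z : ℂ) * (B z * (-(w t) * A t) - -(w t) * B t * A z) := by
      simp only [Dzk, kker]; ring
    rw [heq]
    exact h3.hasDerivWithinAt
  -- mean value estimates
  have hPlip : ‖pxDzk δ θ A A' B B' x z - pxDzk δ θ A A' B B' z z‖
      ≤ (Kw * MB) * ‖x - z‖ := by
    refine Convex.norm_image_sub_le_of_norm_hasDerivWithin_le
      (f := fun t => pxDzk δ θ A A' B B' t z)
      (f' := fun t => -(w t) * Dzk δ θ A A' B B' t z) hPd
      (fun t ht => ?_) (convex_uIcc x z) right_mem_uIcc left_mem_uIcc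
    rw [norm_mul, norm_neg]
    exact mul_le_mul (hKw t (hsub ht)) (hDbd t (hsub ht)) (norm_nonneg _) hKw0
  have hDlip : ‖Dzk δ θ A A' B B' x z - Dzk δ θ A A' B B' z z‖
      ≤ MB * ‖x - z‖ := by
    refine Convex.norm_image_sub_le_of_norm_hasDerivWithin_le
      (f := fun t => Dzk δ θ A A' B B' t z)
      (f' := fun t => pxDzk δ θ A A' B B' t z) hDd
      (fun t ht => hPbd t (hsub ht)) (convex_uIcc x z) right_mem_uIcc left_mem_uIcc
  have hδlip : ‖δ x - δ z‖ ≤ Kδ * ‖x - z‖ := by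
    refine Convex.norm_image_sub_le_of_norm_hasDerivWithin_le hδd
      (fun t ht => by simpa [Real.norm_eq_abs] using hKδ t ht)
      (convex_uIcc x z) right_mem_uIcc left_mem_uIcc
  -- key algebraic identity
  have hkey : DxDzk δ θ A A' B B' x z
      = Complex.I * (θ : ℂ) * (pxDzk δ θ A A' B B' x z - pxDzk δ θ A A' B B' z z)
        - Complex.I * (δ x : ℂ) * (Dzk δ θ A A' B B' x z - Dzk δ θ A A' B B' z z)
        - Complex.I * ((δ x : ℂ) - (δ z : ℂ)) * Dzk δ θ A A' B B' z z := by
    simp only [DxDzk, Dzk, pxDzk, kker]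
    ring
  rw [hkey]
  have e1 : ‖Complex.I * (θ : ℂ) * (pxDzk δ θ A A' B B' x z - pxDzk δ θ A A' B B' z z)‖
      ≤ |θ| * ((Kw * MB) * ‖x - z‖) := by
    rw [norm_mul, norm_mul, Complex.norm_I, one_mul, Complex.norm_real, Real.norm_eq_abs]
    exact mul_le_mul_of_nonneg_left hPlip (abs_nonneg θ)
  have e2 : ‖Complex.I * (δ x : ℂ) * (Dzk δ θ A A' B B' x z - Dzk δ θ A A' B B' z z)‖
      ≤ Mδ * (MB * ‖x - z‖) := by
    rw [norm_mul, norm_mul, Complex.norm_I, one_mul, Complex.norm_real, Real.norm_eq_abs]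
    exact mul_le_mul (hMδ x hx) hDlip (norm_nonneg _) hMδ0
  have e3 : ‖Complex.I * ((δ x : ℂ) - (δ z : ℂ)) * Dzk δ θ A A' B B' z z‖
      ≤ (Kδ * ‖x - z‖) * MB := by
    rw [norm_mul, norm_mul, Complex.norm_I, one_mul]
    have : ‖(δ x : ℂ) - (δ z : ℂ)‖ = ‖δ x - δ z‖ := by
      rw [← Complex.ofReal_sub, Complex.norm_real]
    rw [this]
    exact mul_le_mul hδlip (hDbd z hz) (norm_nonneg _) (by positivity)
  calc ‖_ - _ - _‖ ≤ ‖_ - _‖ + ‖_‖ := norm_sub_le _ _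
    _ ≤ (‖_‖ + ‖_‖) + ‖_‖ := by gcongr; exact norm_sub_le _ _
    _ ≤ (|θ| * ((Kw * MB) * ‖x - z‖) + Mδ * (MB * ‖x - z‖)) + (Kδ * ‖x - z‖) * MB :=
        add_le_add (add_le_add e1 e2) e3
    _ = ((|θ| * Kw + Mδ + Kδ) * MB) * ‖x - z‖ := by ring
    _ = ((|θ| * Kw + Mδ + Kδ) * ((|θ| + Mδ) * (2 * M ^ 2))) * |x - z| := by
        rw [hMBdef, Real.norm_eq_abs]

/-- Uniform boundedness of the regularized kernel `(D_x^θ D_z^θ k^ν)(x,z)/(α(x)+iν)`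
on `D₀ = {(x,z) ∈ [-L,H]² : 0 ≤ z ≤ x or x ≤ z ≤ 0}`, uniformly in
`ν ∈ [-1,1] \ {0}` (Remark 4.3 of the paper). -/
theorem regularized_kernel_uniformly_bounded
    (L H r : ℝ) (hL : 0 < L) (hH : 0 < H) (hr : 0 < r)
    (α δ : ℝ → ℝ)
    (hα : ContDiffOn ℝ 2 α (Set.Ici (-L)))
    (hαbd : ∃ C, ∀ x, -L ≤ x → |α x| ≤ C)
    (hα0 : α 0 = 0) (hα'0 : deriv α 0 < 0)
    (hαr : ∀ x ∈ Set.Icc (-L) H, r * |x| ≤ |α x|)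
    (hδ : ContDiffOn ℝ 1 δ (Set.Ici (-L)))
    (hδbd : ∃ C, ∀ x, -L ≤ x → |δ x| ≤ C)
    (θ : ℝ)
    -- the families ν ↦ A_ν, B_ν of fundamental solutions of −u'' − (α+iν)u = 0
    (A A' B B' : ℝ → ℝ → ℂ)
    (hA : ∀ ν ∈ Set.Icc (-1:ℝ) 1, ∀ x, -L ≤ x → HasDerivAt (A ν) (A' ν x) x)
    (hA' : ∀ ν ∈ Set.Icc (-1:ℝ) 1, ∀ x, -L ≤ x →
      HasDerivAt (A' ν) (-((α x : ℂ) + Complex.I * (ν : ℂ)) * A ν x) x)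
    (hB : ∀ ν ∈ Set.Icc (-1:ℝ) 1, ∀ x, -L ≤ x → HasDerivAt (B ν) (B' ν x) x)
    (hB' : ∀ ν ∈ Set.Icc (-1:ℝ) 1, ∀ x, -L ≤ x →
      HasDerivAt (B' ν) (-((α x : ℂ) + Complex.I * (ν : ℂ)) * B ν x) x)
    (hA0 : ∀ ν ∈ Set.Icc (-1:ℝ) 1, A ν 0 = 1 ∧ A' ν 0 = 0)
    (hB0 : ∀ ν ∈ Set.Icc (-1:ℝ) 1, B ν 0 = 0 ∧ B' ν 0 = 1) :
    ∃ C > 0, ∀ ν ∈ Set.Icc (-1:ℝ) 1, ν ≠ 0 →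
      ∀ x z : ℝ, x ∈ Set.Icc (-L) H →
      ((0 ≤ z ∧ z ≤ x) ∨ (x ≤ z ∧ z ≤ 0)) →
      ‖DxDzk δ θ (A ν) (A' ν) (B ν) (B' ν) x z‖ ≤ C * ‖(α x : ℂ) + Complex.I * (ν : ℂ)‖ := by
  obtain ⟨Cα, hCα⟩ := hαbd
  obtain ⟨Cδ, hCδ⟩ := hδbd
  have hL0 : (-L : ℝ) ≤ 0 := by linarith
  have h0H : (0 : ℝ) ≤ H := hH.le
  have hCα0 : 0 ≤ Cα := le_trans (abs_nonneg _) (hCα 0 hL0)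
  have hCδ0 : 0 ≤ Cδ := le_trans (abs_nonneg _) (hCδ 0 hL0)
  set Kw : ℝ := Cα + 1 with hKwdef
  have hKw0 : 0 ≤ Kw := by positivity
  have hKw1 : 1 ≤ Kw := by linarith
  set M : ℝ := Real.exp (Kw * (H - -L)) with hMdef
  have hM0 : 0 < M := Real.exp_pos _
  -- the coefficient bound
  have hwbd : ∀ ν ∈ Set.Icc (-1:ℝ) 1, ∀ t ∈ Set.Icc (-L) H,
      ‖(α t : ℂ) + Complex.I * (ν : ℂ)‖ ≤ Kw := by
    intro ν hν t ht
    have hν1 : |ν| ≤ 1 := abs_le.mpr ⟨hν.1, hν.2⟩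
    calc ‖(α t : ℂ) + Complex.I * (ν : ℂ)‖
        ≤ ‖(α t : ℂ)‖ + ‖Complex.I * (ν : ℂ)‖ := norm_add_le _ _
      _ = |α t| + |ν| := by
          simp [norm_mul, Real.norm_eq_abs]
      _ ≤ Cα + 1 := add_le_add (hCα t ht.1) hν1
  -- uniform bound for solutions of the ODE system
  have solbd : ∀ ν ∈ Set.Icc (-1:ℝ) 1, ∀ u u' : ℝ → ℂ,
      (∀ x, -L ≤ x → HasDerivAt u (u' x) x) →
      (∀ x, -L ≤ x → HasDerivAt u' (-((α x : ℂ) + Complex.I * (ν : ℂ)) * u x) x) →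
      ‖u 0‖ ≤ 1 → ‖u' 0‖ ≤ 1 →
      ∀ t ∈ Set.Icc (-L) H, ‖u t‖ ≤ M ∧ ‖u' t‖ ≤ M := by
    intro ν hν u u' hu hu' h0 h0'
    set f : ℝ → ℂ × ℂ := fun t => (u t, u' t) with hfdef
    set f' : ℝ → ℂ × ℂ :=
      fun t => (u' t, -((α t : ℂ) + Complex.I * (ν : ℂ)) * u t) with hf'def
    have hd : ∀ t ∈ Set.Icc (-L) H, HasDerivAt f (f' t) t :=
      fun t ht => (hu t ht.1).prodMk (hu' t ht.1)
    have hb : ∀ t ∈ Set.Icc (-L) H, ‖f' t‖ ≤ Kw * ‖f t‖ := by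
      intro t ht
      have hn1 : ‖u t‖ ≤ ‖f t‖ := norm_fst_le (f t)
      have hn2 : ‖u' t‖ ≤ ‖f t‖ := norm_snd_le (f t)
      have hfeq : ‖f' t‖ = max ‖u' t‖ ‖-((α t : ℂ) + Complex.I * (ν : ℂ)) * u t‖ :=
        Prod.norm_def _
      rw [hfeq]
      refine max_le ?_ ?_
      · calc ‖u' t‖ ≤ ‖f t‖ := hn2
          _ ≤ Kw * ‖f t‖ := le_mul_of_one_le_left (norm_nonneg _) hKw1
      · rw [norm_mul, norm_neg]
        exact mul_le_mul (hwbd ν hν t ht) hn1 (norm_nonneg _) hKw0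
    have h00 : (0:ℝ) ∈ Set.Icc (-L) H := ⟨hL0, h0H⟩
    have hf0 : ‖f 0‖ ≤ 1 := by
      rw [Prod.norm_def]
      exact max_le h0 h0'
    intro t ht
    have hmain := ode_bound hKw0 hd hb h00 t ht
    have hfM : ‖f t‖ ≤ M := by
      calc ‖f t‖ ≤ ‖f 0‖ * Real.exp (Kw * (H - -L)) := hmain
        _ ≤ 1 * M := by
            rw [hMdef]
            exact mul_le_mul_of_nonneg_right hf0 (Real.exp_pos _).le
        _ = M := one_mul M
    constructor
    · exact le_trans (norm_fst_le (f t)) hfM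
    · exact le_trans (norm_snd_le (f t)) hfM
  -- bound on derivative of δ
  have hδdiff : DifferentiableOn ℝ δ (Set.Ici (-L)) := hδ.differentiableOn one_ne_zero
  have hδderivcont : ContinuousOn (derivWithin δ (Set.Ici (-L))) (Set.Ici (-L)) :=
    hδ.continuousOn_derivWithin (uniqueDiffOn_Ici _) le_rfl
  obtain ⟨Kδ, hKδ⟩ := (isCompact_Icc (a := -L) (b := H)).exists_bound_of_continuousOn
    (hδderivcont.mono Set.Icc_subset_Ici_self)
  have hKδ0 : 0 ≤ Kδ := le_trans (norm_nonneg _) (hKδ 0 ⟨hL0, h0H⟩)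
  -- the constant
  set Ctot : ℝ := (|θ| * Kw + Cδ + Kδ) * ((|θ| + Cδ) * (2 * M ^ 2)) with hCtotdef
  have hCtot0 : 0 ≤ Ctot := by
    apply mul_nonneg
    · have : 0 ≤ |θ| * Kw := mul_nonneg (abs_nonneg _) hKw0
      linarith
    · apply mul_nonneg
      · linarith [abs_nonneg θ]
      · positivity
  refine ⟨(Ctot + 1) / r, by positivity, ?_⟩
  intro ν hν hν0 x z hx hzx
  -- the M-bounds for A, B families
  have hMA := solbd ν hν (A ν) (A' ν) (hA ν hν) (hA' ν hν)
    (by rw [(hA0 ν hν).1]; simp) (by rw [(hA0 ν hν).2]; simp)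
  have hMB := solbd ν hν (B ν) (B' ν) (hB ν hν) (hB' ν hν)
    (by rw [(hB0 ν hν).1]; simp) (by rw [(hB0 ν hν).2]; simp)
  -- the segment
  have hz : z ∈ Set.Icc (-L) H := by
    rcases hzx with ⟨h0z, hzx'⟩ | ⟨hxz', hz0⟩
    · exact ⟨by linarith, by linarith [hx.2]⟩
    · exact ⟨by linarith [hx.1], by linarith⟩
  have hsub : Set.uIcc x z ⊆ Set.Icc (-L) H := by
    rcases hzx with ⟨h0z, hzx'⟩ | ⟨hxz', hz0⟩
    · rw [Set.uIcc_of_ge hzx']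
      exact Set.Icc_subset_Icc (by linarith) hx.2
    · rw [Set.uIcc_of_le hxz']
      exact Set.Icc_subset_Icc hx.1 (by linarith [hx.2])
  have hxz_abs : |x - z| ≤ |x| := by
    rcases hzx with ⟨h0z, hzx'⟩ | ⟨hxz', hz0⟩
    · rw [_root_.abs_of_nonneg (by linarith : (0:ℝ) ≤ x - z), _root_.abs_of_nonneg (by linarith : (0:ℝ) ≤ x)]
      linarith
    · rw [_root_.abs_of_nonpos (by linarith : x - z ≤ 0), _root_.abs_of_nonpos (by linarith : x ≤ 0)]
      linarith
  -- apply the main estimate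
  have hest := main_est δ (derivWithin δ (Set.Ici (-L))) θ
    (fun t => (α t : ℂ) + Complex.I * (ν : ℂ)) (A ν) (A' ν) (B ν) (B' ν)
    (-L) H x z hx hz hsub
    (fun t ht => hA ν hν t ht.1) (fun t ht => hA' ν hν t ht.1)
    (fun t ht => hB ν hν t ht.1) (fun t ht => hB' ν hν t ht.1)
    (fun t ht => ((hδdiff t (hsub ht).1).hasDerivWithinAt).mono
      (hsub.trans Set.Icc_subset_Ici_self))
    M Kw Cδ Kδ
    (fun t ht => ⟨(hMA t ht).1, (hMA t ht).2, (hMB t ht).1, (hMB t ht).2⟩)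
    (hwbd ν hν)
    (fun t ht => hCδ t ht.1)
    (fun t ht => by
      simpa [Real.norm_eq_abs] using hKδ t (hsub ht))
  -- conclude
  have hre : |α x| ≤ ‖(α x : ℂ) + Complex.I * (ν : ℂ)‖ := by
    have h1 := Complex.abs_re_le_norm ((α x : ℂ) + Complex.I * (ν : ℂ))
    have h2 : ((α x : ℂ) + Complex.I * (ν : ℂ)).re = α x := by
      simp
    rw [h2] at h1
    exact h1
  have hrx : r * |x - z| ≤ ‖(α x : ℂ) + Complex.I * (ν : ℂ)‖ :=
    le_trans (mul_le_mul_of_nonneg_left hxz_abs hr.le) (le_trans (hαr x hx) hre)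
  rw [div_mul_eq_mul_div, le_div_iff₀ hr]
  have hCtoteq : (|θ| * Kw + Cδ + Kδ) * ((|θ| + Cδ) * (2 * M ^ 2)) = Ctot := by rw [hCtotdef]
  rw [hCtoteq] at hest
  nlinarith [mul_le_mul_of_nonneg_left hrx hCtot0, mul_le_mul_of_nonneg_right hest hr.le,
    norm_nonneg ((α x : ℂ) + Complex.I * (ν : ℂ)),
    norm_nonneg (DxDzk δ θ (A ν) (A' ν) (B ν) (B' ν) x z)]
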